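/- Let k ≥ 2 be an integer, let x, s ∈ ℂ with s ≠ 0, let R be the multiset of roots in ℂ, counted with multiplicity, of the monic polynomial X^k − x·X^{k−1} − s, and let P = ∏_{α∈R} α be the product of all roots. Then ∏_{α∈R} (X − P/α) = X^k + (−1)^{k−1}·s^{k−2}·x·X − s^{k−1} as polynomials in ℂ[X]. In particular, the polynomial t^k + (−1)^{k−1}s^{k−2}x·t − s^{k−1} is the characteristic polynomial of the sequence (e_{k−1}(α^m : α∈R))_{m≥0}. -/

import Mathlib

private lemma sum3aux (M : Multiset ℂ) (f g h : ℂ → ℂ) :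
    (M.map f).sum + (M.map g).sum - (M.map h).sum = (M.map fun a => f a + g a - h a).sum := by
  induction M using Multiset.induction_on with
  | empty => simp
  | cons a M ih => simp only [Multiset.map_cons, Multiset.sum_cons, ← ih]; ring

private lemma esymm_bridge (M : Multiset ℂ) : M ≠ 0 → (∀ a ∈ M, a ≠ 0) →
    M.esymm (Multiset.card M - 1) = M.prod * (M.map fun a => a⁻¹).sum := by
  induction M using Multiset.induction_on with
  | empty => intro h; exact absurd rfl h
  | cons a M ih =>
    intro _ h0
    have ha : a ≠ 0 := h0 a (Multiset.mem_cons_self a M)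
    by_cases hM : M = 0
    · subst hM
      simp [Multiset.esymm, mul_inv_cancel₀ ha]
    · obtain ⟨c, hc⟩ : ∃ c, Multiset.card M = c + 1 :=
        ⟨Multiset.card M - 1, (Nat.succ_pred_eq_of_pos (Multiset.card_pos.2 hM)).symm⟩
      have htop : M.esymm (Multiset.card M) = M.prod := by
        have h1 : Multiset.card (M.powersetCard (Multiset.card M)) = 1 := by simp
        obtain ⟨t, ht⟩ := Multiset.card_eq_one.mp h1
        have hm : M ∈ M.powersetCard (Multiset.card M) :=
          Multiset.mem_powersetCard.2 ⟨le_rfl, rfl⟩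
        rw [ht] at hm
        rw [Multiset.esymm, ht, Multiset.mem_singleton.mp hm]
        simp
      have hrec : (a ::ₘ M).esymm (c + 1) = M.esymm (c + 1) + a * M.esymm c := by
        simp [Multiset.esymm, Multiset.powersetCard_cons, Multiset.map_map,
          Function.comp, Multiset.sum_map_mul_left]
      have hih := ih hM (fun b hb => h0 b (Multiset.mem_cons_of_mem hb))
      rw [hc] at htop hih
      simp only [Nat.add_sub_cancel] at hih
      have hcard1 : Multiset.card (a ::ₘ M) - 1 = c + 1 := by
        simp [Multiset.card_cons, hc]
      rw [hcard1, hrec, htop, hih, Multiset.prod_cons, Multiset.map_cons, Multiset.sum_cons]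
      field_simp

open Polynomial in
theorem stmt8 (k : ℕ) (hk : 2 ≤ k) (x s : ℂ) (hs : s ≠ 0) (R : Multiset ℂ)
    (hR : R = (X ^ k - C x * X ^ (k - 1) - C s : ℂ[X]).roots)
    (P : ℂ) (hP : P = R.prod) :
    (R.map fun α => (X - C (P / α) : ℂ[X])).prod
        = X ^ k + C ((-1 : ℂ) ^ (k - 1) * s ^ (k - 2) * x) * X - C (s ^ (k - 1))
      ∧ ∀ m : ℕ,
        (R.map fun α => α ^ (m + k)).esymm (k - 1)
            + (-1 : ℂ) ^ (k - 1) * s ^ (k - 2) * x * (R.map fun α => α ^ (m + 1)).esymm (k - 1)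
            - s ^ (k - 1) * (R.map fun α => α ^ m).esymm (k - 1) = 0 := by
  obtain ⟨j, rfl⟩ : ∃ j, k = j + 2 := ⟨k - 2, by omega⟩
  have e1 : j + 2 - 1 = j + 1 := rfl
  have e2 : j + 2 - 2 = j := rfl
  simp only [e1, e2] at hR ⊢
  set p : ℂ[X] := X ^ (j + 2) - C x * X ^ (j + 1) - C s with hpdef
  have hmonic : p.Monic := by rw [hpdef]; monicity!
  have hdeg : p.natDegree = j + 2 := by rw [hpdef]; compute_degree!
  have hsplit : p = (R.map fun α => X - C α).prod := by
    rw [hR]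
    exact (IsAlgClosed.splits p).eq_prod_roots_of_monic hmonic
  have hcard : Multiset.card R = j + 2 := by
    rw [hR, ← hdeg]
    exact splits_iff_card_roots.mp (IsAlgClosed.splits p)
  have heval : ∀ z : ℂ, (R.map fun α => z - α).prod = z ^ (j + 2) - x * z ^ (j + 1) - s := by
    intro z
    have h := congrArg (eval z) hsplit
    rw [eval_multiset_prod, Multiset.map_map] at h
    simp only [Function.comp, eval_sub, eval_X, eval_C, eval_mul, eval_pow] at h
    rw [← h]
    simp [hpdef]
  have hroots0 : ∀ α ∈ R, α ≠ 0 := by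
    intro α hα h0
    have : eval α p = 0 := by
      rw [hR] at hα
      exact (isRoot_of_mem_roots hα)
    rw [h0] at this
    simp [hpdef] at this
    exact hs this
  have h0eval := heval 0
  simp only [zero_sub, zero_pow (by omega : j + 2 ≠ 0), zero_pow (by omega : j + 1 ≠ 0),
    mul_zero, zero_sub, sub_zero, zero_mul] at h0eval
  rw [show (fun α : ℂ => -α) = (Neg.neg : ℂ → ℂ) from rfl] at h0eval
  rw [Multiset.prod_map_neg, hcard] at h0eval
  -- h0eval : (-1)^(j+2) * R.prod = 0 - 0 - s  maybe; inspect later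
  have hPs : P = (-1 : ℂ) ^ (j + 1) * s := by
    have hsq : ((-1 : ℂ)) ^ (j + 2) * ((-1 : ℂ)) ^ (j + 2) = 1 := by
      rw [← pow_add]
      exact Even.neg_one_pow ⟨j + 2, rfl⟩
    rw [hP]
    have := congrArg (fun t => ((-1 : ℂ)) ^ (j + 2) * t) h0eval
    simp only [← mul_assoc, hsq, one_mul] at this
    rw [this]
    ring_nf
  have hP0 : P ≠ 0 := by
    rw [hPs]
    exact mul_ne_zero (pow_ne_zero _ (by norm_num)) hs
  have hPk : P ^ (j + 2) = s ^ (j + 2) := by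
    rw [hPs, mul_pow, ← pow_mul, (Nat.even_mul_succ_self (j + 1)).neg_one_pow, one_mul]
  have hPk1 : P ^ (j + 1) = (-1 : ℂ) ^ (j + 1) * s ^ (j + 1) := by
    rcases Nat.even_or_odd (j + 1) with h | h
    · rw [hPs, mul_pow, ← pow_mul, (h.mul_right _).neg_one_pow, h.neg_one_pow]
    · rw [hPs, mul_pow, ← pow_mul, (h.mul h).neg_one_pow, h.neg_one_pow]
  have hkey : ∀ z : ℂ, (R.map fun α => P - α * z).prod
      = P ^ (j + 2) - x * P ^ (j + 1) * z - s * z ^ (j + 2) := by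
    intro z
    by_cases hz : z = 0
    · subst hz
      simp only [mul_zero, sub_zero, zero_pow (by omega : j + 2 ≠ 0)]
      rw [Multiset.map_const', Multiset.prod_replicate, hcard]
    · have h2 : (R.map fun α => P - α * z) = (R.map fun α => z * (P / z - α)) := by
        apply Multiset.map_congr rfl
        intro α _
        field_simp
      rw [h2, Multiset.prod_map_mul, Multiset.map_const', Multiset.prod_replicate, hcard,
        heval (P / z)]
      rw [div_pow, div_pow]
      field_simp
      ring
  have hmain : (R.map fun α => (X - C (P / α) : ℂ[X])).prod
      = X ^ (j + 2) + C ((-1 : ℂ) ^ (j + 1) * s ^ j * x) * X - C (s ^ (j + 1)) := by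
    apply Polynomial.funext
    intro z
    rw [eval_multiset_prod, Multiset.map_map]
    simp only [Function.comp, eval_sub, eval_add, eval_mul, eval_X, eval_C, eval_pow]
    apply mul_left_cancel₀ hP0
    have hstep : P * (R.map fun α => z - P / α).prod = (R.map fun α => α * z - P).prod := by
      nth_rewrite 1 [hP]
      rw [show R.prod = (R.map id).prod by rw [Multiset.map_id], ← Multiset.prod_map_mul]
      apply congrArg
      apply Multiset.map_congr rfl
      intro α hα
      have hα0 := hroots0 α hα
      simp only [id]
      field_simp
    rw [hstep]
    have hneg : (R.map fun α => α * z - P) = (R.map fun α => P - α * z).map Neg.neg := by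
      rw [Multiset.map_map]
      apply Multiset.map_congr rfl
      intro α _
      simp
    rw [hneg, Multiset.prod_map_neg, Multiset.card_map, hcard, hkey z, hPk, hPk1, hPs]
    rw [show ((-1 : ℂ)) ^ (j + 2) = ((-1 : ℂ)) ^ (j + 1) * (-1) from pow_succ _ _]
    set u : ℂ := (-1) ^ (j + 1) with hudef
    ring
  refine ⟨hmain, ?_⟩
  have hroot : ∀ α ∈ R, (P / α) ^ (j + 2)
      + (-1 : ℂ) ^ (j + 1) * s ^ j * x * (P / α) - s ^ (j + 1) = 0 := by
    intro α hα
    have h1 : eval (P / α) ((R.map fun α' => (X - C (P / α') : ℂ[X])).prod) = 0 := by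
      rw [eval_multiset_prod, Multiset.map_map]
      apply Multiset.prod_eq_zero
      exact Multiset.mem_map.2 ⟨α, hα, by simp⟩
    rw [hmain] at h1
    simpa using h1
  have hsum : ∀ m : ℕ, (R.map fun α => α ^ m).esymm (j + 1)
      = (R.map fun α => (P / α) ^ m).sum := by
    intro m
    have hne : (R.map fun α => α ^ m) ≠ 0 := by
      simp only [ne_eq, Multiset.map_eq_zero]
      intro h
      rw [h] at hcard
      simp at hcard
    have h0 : ∀ a ∈ R.map fun α => α ^ m, a ≠ 0 := by
      intro a ha
      obtain ⟨α, hα, rfl⟩ := Multiset.mem_map.1 ha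
      exact pow_ne_zero _ (hroots0 α hα)
    have hb := esymm_bridge _ hne h0
    rw [Multiset.card_map, hcard] at hb
    simp only [e1] at hb
    have hprodpow : (R.map fun α => α ^ m).prod = P ^ m := by
      rw [hP]
      have := Multiset.prod_map_pow (m := R) (f := (id : ℂ → ℂ)) (n := m)
      simpa using this
    rw [hb, hprodpow, Multiset.map_map, ← Multiset.sum_map_mul_left]
    apply congrArg
    apply Multiset.map_congr rfl
    intro α _
    rw [Function.comp_apply, div_pow, div_eq_mul_inv]
  intro m
  rw [hsum (m + (j + 2)), hsum (m + 1), hsum m, ← Multiset.sum_map_mul_left,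
    ← Multiset.sum_map_mul_left, sum3aux]
  have hz : (R.map fun α => (P / α) ^ (m + (j + 2))
      + (-1 : ℂ) ^ (j + 1) * s ^ j * x * (P / α) ^ (m + 1)
      - s ^ (j + 1) * (P / α) ^ m) = R.map (fun _ => (0 : ℂ)) := by
    apply Multiset.map_congr rfl
    intro α hα
    have h := hroot α hα
    have hpa : (P / α) ^ (m + (j + 2)) = (P / α) ^ m * (P / α) ^ (j + 2) := by
      rw [pow_add]
    have hp1 : (P / α) ^ (m + 1) = (P / α) ^ m * (P / α) := by rw [pow_succ]
    rw [hpa, hp1]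
    linear_combination ((P / α) ^ m) * h
  rw [hz]
  simp
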